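/- Suppose ω^1, …, ω^n are smooth 1-forms on ℝ^m satisfying the structure equations of 𝔤 in the basis β, and suppose f : ℝ^m → ℝ is a smooth function with df = ω^n. Define 1-forms ω̂^1, …, ω̂^n by ω̂^i(x) = Σ_j exp(f(x)·[ad(e_n)])^i_j · ω^j(x), where exp denotes the matrix exponential. Then ω̂^n = ω^n, dω̂^n = 0, and for a = 1, …, n−1: dω̂^a + (1/2) Σ_{b,c=1}^{n−1} C^a_{bc} ω̂^b ∧ ω̂^c = 0; that is, ω̂^1, …, ω̂^{n−1} satisfy the structure equations of the (n−1)-dimensional Lie algebra 𝔨 in the basis (e_1, …, e_{n−1}). -/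

import Mathlib

open scoped BigOperators

noncomputable section

/-- The matrix exponential. -/
def matExp {k : ℕ} (A : Matrix (Fin k) (Fin k) ℝ) : Matrix (Fin k) (Fin k) ℝ :=
  NormedSpace.exp A

/-- Exterior derivative of a smooth 1-form, evaluated at `x` on vectors `u, v`. -/
def extDerivOneForm {E : Type*} [NormedAddCommGroup E] [NormedSpace ℝ E]
    (ω : E → E →L[ℝ] ℝ) (x u v : E) : ℝ :=
  fderiv ℝ ω x u v - fderiv ℝ ω x v u

/-- Wedge product of two 1-forms, evaluated at `x` on vectors `u, v`. -/
def wedge {E : Type*} [NormedAddCommGroup E] [NormedSpace ℝ E]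
    (α β : E → E →L[ℝ] ℝ) (x u v : E) : ℝ :=
  α x u * β x v - α x v * β x u

/-- The 1-forms `ω i` satisfy the structure equations with structure constants `C`:
`dωⁱ + (1/2) Σ_{j,k} Cⁱ_{jk} ωʲ ∧ ωᵏ = 0`. -/
def StructEq {E : Type*} [NormedAddCommGroup E] [NormedSpace ℝ E] {n : ℕ}
    (C : Fin n → Fin n → Fin n → ℝ) (ω : Fin n → E → E →L[ℝ] ℝ) : Prop :=
  ∀ i x u v, extDerivOneForm (ω i) x u v
    + (1 / 2) * ∑ j, ∑ k, C i j k * wedge (ω j) (ω k) x u v = 0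

/-- The matrix of `ad(e_i)` in the basis `e`: its `(a,b)` entry is `C a i b`, where
`⁅e_j, e_k⁆ = Σ_i C i j k • e_i`. -/
def adMat {n : ℕ} (C : Fin n → Fin n → Fin n → ℝ) (i : Fin n) :
    Matrix (Fin n) (Fin n) ℝ := fun a b => C a i b

end

noncomputable section AuxLemmas

set_option linter.unusedSectionVars false

variable {k : ℕ}

lemma matExp_entry_hasDerivAt (N : Matrix (Fin k) (Fin k) ℝ) (t : ℝ) (a b : Fin k) :
    HasDerivAt (fun s : ℝ => matExp (s • N) a b) ((N * matExp (t • N)) a b) t := by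
  letI : SeminormedRing (Matrix (Fin k) (Fin k) ℝ) := Matrix.linftyOpSemiNormedRing
  letI : NormedRing (Matrix (Fin k) (Fin k) ℝ) := Matrix.linftyOpNormedRing
  letI : NormedAlgebra ℝ (Matrix (Fin k) (Fin k) ℝ) := Matrix.linftyOpNormedAlgebra
  have h : HasDerivAt (fun s : ℝ => NormedSpace.exp (s • N))
      (N * NormedSpace.exp (t • N)) t := hasDerivAt_exp_smul_const' N t
  let π₀ : Matrix (Fin k) (Fin k) ℝ →ₗ[ℝ] ℝ :=
    { toFun := fun M => M a b, map_add' := fun _ _ => rfl, map_smul' := fun _ _ => rfl }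
  let π : Matrix (Fin k) (Fin k) ℝ →L[ℝ] ℝ := LinearMap.toContinuousLinearMap π₀
  have := (π.hasFDerivAt (x := NormedSpace.exp (t • N))).comp_hasDerivAt t h
  exact this

lemma matExp_zero_smul (N : Matrix (Fin k) (Fin k) ℝ) : matExp ((0:ℝ) • N) = 1 := by
  simp [matExp, NormedSpace.exp_zero]

lemma matExp_zero' : matExp (0 : Matrix (Fin k) (Fin k) ℝ) = 1 := by
  simp [matExp, NormedSpace.exp_zero]

lemma matExp_mul_matExp_neg (N : Matrix (Fin k) (Fin k) ℝ) (t : ℝ) :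
    matExp (t • N) * matExp ((-t) • N) = 1 := by
  rw [matExp, matExp, ← Matrix.exp_add_of_commute]
  · simp [← add_smul, matExp, NormedSpace.exp_zero]
  · exact (Commute.refl N).smul_left t |>.smul_right (-t)

lemma matExp_neg_mul_matExp (N : Matrix (Fin k) (Fin k) ℝ) (t : ℝ) :
    matExp ((-t) • N) * matExp (t • N) = 1 := by
  have := matExp_mul_matExp_neg N (-t); simpa using this

lemma matExp_commute (N : Matrix (Fin k) (Fin k) ℝ) (t : ℝ) :
    N * matExp (t • N) = matExp (t • N) * N := by
  letI : SeminormedRing (Matrix (Fin k) (Fin k) ℝ) := Matrix.linftyOpSemiNormedRing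
  letI : NormedRing (Matrix (Fin k) (Fin k) ℝ) := Matrix.linftyOpNormedRing
  letI : NormedAlgebra ℝ (Matrix (Fin k) (Fin k) ℝ) := Matrix.linftyOpNormedAlgebra
  exact (((Commute.refl N).smul_right t).exp_right)

lemma sumswap (A : Fin k → ℝ) (Bf : Fin k → Fin k → ℝ) (V : Fin k → ℝ) :
    ∑ j, A j * ∑ x, Bf j x * V x = ∑ x, (∑ j, A j * Bf j x) * V x := by
  simp only [Finset.mul_sum, Finset.sum_mul]
  rw [Finset.sum_comm]
  exact Finset.sum_congr rfl fun x _ => Finset.sum_congr rfl fun j _ => by ring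

lemma one_collapse (i : Fin k) (V : Fin k → ℝ) :
    ∑ j, (1 : Matrix (Fin k) (Fin k) ℝ) i j * V j = V i := by
  simp [Matrix.one_apply]

lemma matExp_row_one (N : Matrix (Fin k) (Fin k) ℝ) (a : Fin k) (hrow : ∀ b, N a b = 0)
    (t : ℝ) (b : Fin k) : matExp (t • N) a b = (1 : Matrix (Fin k) (Fin k) ℝ) a b := by
  have hd : ∀ s : ℝ, HasDerivAt (fun s : ℝ => matExp (s • N) a b) 0 s := by
    intro s
    have h := matExp_entry_hasDerivAt N s a b
    have : (N * matExp (s • N)) a b = 0 := by simp [Matrix.mul_apply, hrow]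
    rwa [this] at h
  have hdiff : Differentiable ℝ (fun s : ℝ => matExp (s • N) a b) :=
    fun s => (hd s).differentiableAt
  have hcst := is_const_of_deriv_eq_zero hdiff (fun s => (hd s).deriv) t 0
  rw [hcst, matExp_zero_smul]

open Matrix in
lemma matExp_aut (N : Matrix (Fin k) (Fin k) ℝ) (Cm : Fin k → Matrix (Fin k) (Fin k) ℝ)
    (hder : ∀ i, Nᵀ * Cm i + Cm i * N = ∑ j, N i j • Cm j)
    (t : ℝ) (p q : Fin k) (a : Fin k) :
    ((matExp (t • N))ᵀ * Cm a * matExp (t • N)) p q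
      = ∑ j, matExp (t • N) a j * Cm j p q := by
  letI : SeminormedRing (Matrix (Fin k) (Fin k) ℝ) := Matrix.linftyOpSemiNormedRing
  letI : NormedRing (Matrix (Fin k) (Fin k) ℝ) := Matrix.linftyOpNormedRing
  letI : NormedAlgebra ℝ (Matrix (Fin k) (Fin k) ℝ) := Matrix.linftyOpNormedAlgebra
  -- the entry projection CLM
  let π : ∀ (_ : Fin k) (_ : Fin k), Matrix (Fin k) (Fin k) ℝ →L[ℝ] ℝ := fun i j =>
    LinearMap.toContinuousLinearMap
      { toFun := fun M => M i j, map_add' := fun _ _ => rfl, map_smul' := fun _ _ => rfl }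
  have hE : ∀ s : ℝ, HasDerivAt (fun s : ℝ => matExp (s • N)) (N * matExp (s • N)) s :=
    fun s => hasDerivAt_exp_smul_const' N s
  -- the transpose CLM
  let τ : Matrix (Fin k) (Fin k) ℝ →L[ℝ] Matrix (Fin k) (Fin k) ℝ :=
    LinearMap.toContinuousLinearMap
      { toFun := fun M => Mᵀ, map_add' := fun _ _ => rfl, map_smul' := fun _ _ => rfl }
  have hET : ∀ s : ℝ, HasDerivAt (fun s : ℝ => (matExp (s • N))ᵀ) ((N * matExp (s • N))ᵀ) s :=
    fun s => ((τ.hasFDerivAt).comp_hasDerivAt s (hE s))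
  -- V s i = (E(s)ᵀ * Cm i * E(s)) p q satisfies V' = N ⬝ V
  set V : ℝ → Fin k → ℝ := fun s i => ((matExp (s • N))ᵀ * Cm i * matExp (s • N)) p q with hV
  have hVd : ∀ (s : ℝ) (i : Fin k),
      HasDerivAt (fun s => V s i) (∑ j, N i j * V s j) s := by
    intro s i
    have hM : HasDerivAt (fun s : ℝ => (matExp (s • N))ᵀ * Cm i * matExp (s • N))
        (((N * matExp (s • N))ᵀ * Cm i) * matExp (s • N)
          + ((matExp (s • N))ᵀ * Cm i) * (N * matExp (s • N))) s :=
      ((hET s).mul_const (Cm i)).mul (hE s)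
    have hval : ((N * matExp (s • N))ᵀ * Cm i) * matExp (s • N)
          + ((matExp (s • N))ᵀ * Cm i) * (N * matExp (s • N))
        = ∑ j, N i j • ((matExp (s • N))ᵀ * Cm j * matExp (s • N)) := by
      have h1 : (N * matExp (s • N))ᵀ = (matExp (s • N))ᵀ * Nᵀ := by
        rw [Matrix.transpose_mul]
      rw [h1]
      have : (matExp (s • N))ᵀ * Nᵀ * Cm i * matExp (s • N)
            + (matExp (s • N))ᵀ * Cm i * (N * matExp (s • N))
          = (matExp (s • N))ᵀ * (Nᵀ * Cm i + Cm i * N) * matExp (s • N) := by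
        noncomm_ring
      rw [this, hder i, Matrix.mul_sum, Matrix.sum_mul]
      exact Finset.sum_congr rfl fun j _ => by
        rw [Matrix.mul_smul, Matrix.smul_mul]
    rw [hval] at hM
    have := ((π p q).hasFDerivAt).comp_hasDerivAt s hM
    refine this.congr_deriv ?_
    change (∑ j, N i j • ((matExp (s • N))ᵀ * Cm j * matExp (s • N))) p q = _
    simp [Matrix.sum_apply, hV]
  -- H s i = ∑ j (exp (-s N)) i j * V s j  has zero derivative
  have hcomm : ∀ s : ℝ, N * matExp (s • N) = matExp (s • N) * N := matExp_commute N
  have hHd : ∀ (s : ℝ) (i : Fin k),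
      HasDerivAt (fun s : ℝ => ∑ j, matExp ((-s) • N) i j * V s j) 0 s := by
    intro s i
    have hterm : ∀ j : Fin k, HasDerivAt (fun s : ℝ => matExp ((-s) • N) i j * V s j)
        ((N * matExp ((-s) • N)) i j * (-1) * V s j
          + matExp ((-s) • N) i j * ∑ x, N j x * V s x) s := by
      intro j
      have h1 : HasDerivAt (fun s : ℝ => matExp ((-s) • N) i j)
          ((N * matExp ((-s) • N)) i j * (-1)) s := by
        have hneg : HasDerivAt (fun s : ℝ => -s) (-1) s := hasDerivAt_neg s
        exact HasDerivAt.comp s (matExp_entry_hasDerivAt N (-s) i j) hneg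
      exact h1.mul (hVd s j)
    have hsum : HasDerivAt (fun s : ℝ => ∑ j, matExp ((-s) • N) i j * V s j)
        (∑ j, ((N * matExp ((-s) • N)) i j * (-1) * V s j
          + matExp ((-s) • N) i j * ∑ x, N j x * V s x)) s :=
      HasDerivAt.fun_sum (fun j _ => hterm j)
    have hzero : ∑ j : Fin k, ((N * matExp ((-s) • N)) i j * (-1) * V s j
        + matExp ((-s) • N) i j * ∑ x, N j x * V s x) = 0 := by
      rw [Finset.sum_add_distrib, sumswap (fun j => matExp ((-s) • N) i j) (fun j x => N j x) (fun x => V s x)]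
      have : ∀ x : Fin k, (∑ j, matExp ((-s) • N) i j * N j x)
          = (N * matExp ((-s) • N)) i x := by
        intro x
        rw [hcomm (-s), Matrix.mul_apply]
      simp only [this]
      rw [← Finset.sum_add_distrib]
      apply Finset.sum_eq_zero
      intro j _
      ring
    rwa [hzero] at hsum
  -- hence H is constant; H 0 i = V 0 i = Cm i p q
  have hH0 : ∀ (s : ℝ) (i : Fin k),
      ∑ j, matExp ((-s) • N) i j * V s j = Cm i p q := by
    intro s i
    have hdiff : Differentiable ℝ (fun s : ℝ => ∑ j, matExp ((-s) • N) i j * V s j) :=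
      fun s => (hHd s i).differentiableAt
    have hcst := is_const_of_deriv_eq_zero hdiff (fun s => (hHd s i).deriv) s 0
    rw [hcst]
    have hV0 : ∀ i : Fin k, V 0 i = Cm i p q := by
      intro i
      simp [hV, matExp_zero']
    simp only [neg_zero, zero_smul, matExp_zero', hV0]
    exact one_collapse i fun j => Cm j p q
  -- recover V t a = ∑ j E a j * Cm j p q
  have key : ∑ j, matExp (t • N) a j * (∑ x, matExp ((-t) • N) j x * V t x)
      = ∑ j, matExp (t • N) a j * Cm j p q :=
    Finset.sum_congr rfl fun j _ => by rw [hH0 t j]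
  rw [sumswap (fun j => matExp (t • N) a j) (fun j x => matExp ((-t) • N) j x) (V t)] at key
  have hone : ∀ x : Fin k, (∑ j, matExp (t • N) a j * matExp ((-t) • N) j x)
      = (1 : Matrix (Fin k) (Fin k) ℝ) a x := by
    intro x
    rw [← Matrix.mul_apply, matExp_mul_matExp_neg]
  simp only [hone] at key
  rw [one_collapse a (V t)] at key
  exact key

section LieCoord

variable {n : ℕ} {L : Type} [LieRing L] [LieAlgebra ℝ L] (B : Module.Basis (Fin n) ℝ L)
  (C : Fin n → Fin n → Fin n → ℝ)

lemma lie_sum' {ι : Type*} (x : L) (s : Finset ι) (f : ι → L) :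
    ⁅x, ∑ i ∈ s, f i⁆ = ∑ i ∈ s, ⁅x, f i⁆ := by
  classical
  induction s using Finset.induction with
  | empty => simp
  | insert _ _ h ih => rw [Finset.sum_insert h, Finset.sum_insert h, lie_add, ih]

lemma sum_lie' {ι : Type*} (x : L) (s : Finset ι) (f : ι → L) :
    ⁅∑ i ∈ s, f i, x⁆ = ∑ i ∈ s, ⁅f i, x⁆ := by
  classical
  induction s using Finset.induction with
  | empty => simp
  | insert _ _ h ih => rw [Finset.sum_insert h, Finset.sum_insert h, add_lie, ih]

lemma coeff_eq (c d : Fin n → ℝ) (h : ∑ i, c i • B i = ∑ i, d i • B i) : c = d := by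
  have h2 : ⇑(B.repr (∑ i, c i • B i)) = ⇑(B.repr (∑ i, d i • B i)) := by rw [h]
  rwa [B.repr_sum_self, B.repr_sum_self] at h2

variable (hC : ∀ j k, ⁅B j, B k⁆ = ∑ i, C i j k • B i)
include hC

lemma C_skew (i j k : Fin n) : C i k j = -C i j k := by
  have h : ∑ i', C i' k j • B i' = ∑ i', (-C i' j k) • B i' := by
    rw [← hC k j]
    have : ∑ i', (-C i' j k) • B i' = -∑ i', C i' j k • B i' := by
      rw [← Finset.sum_neg_distrib]
      exact Finset.sum_congr rfl fun i' _ => (neg_smul _ _)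
    rw [this, ← hC j k, ← lie_skew]
  exact congrFun (coeff_eq B _ _ h) i

lemma lie_coeff (j k i : Fin n) : B.repr ⁅B j, B k⁆ i = C i j k := by
  rw [hC j k, B.repr_sum_self]

lemma C_jacobi (ν : Fin n) (i p q : Fin n) :
    ∑ j, C i ν j * C j p q = (∑ b, C b ν p * C i b q) + ∑ c, C c ν q * C i p c := by
  have h1 : ⁅B ν, ⁅B p, B q⁆⁆ = ∑ i', (∑ j, C i' ν j * C j p q) • B i' := by
    calc ⁅B ν, ⁅B p, B q⁆⁆ = ∑ j, C j p q • ⁅B ν, B j⁆ := by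
          rw [hC p q, lie_sum']
          exact Finset.sum_congr rfl fun j _ => lie_smul _ _ _
      _ = ∑ j, ∑ i', (C j p q * C i' ν j) • B i' := by
          refine Finset.sum_congr rfl fun j _ => ?_
          rw [hC ν j, Finset.smul_sum]
          exact Finset.sum_congr rfl fun i' _ => (smul_smul _ _ _)
      _ = ∑ i', (∑ j, C i' ν j * C j p q) • B i' := by
          rw [Finset.sum_comm]
          refine Finset.sum_congr rfl fun i' _ => ?_
          rw [Finset.sum_smul]
          exact Finset.sum_congr rfl fun j _ => by rw [mul_comm]
  have h2 : ⁅⁅B ν, B p⁆, B q⁆ = ∑ i', (∑ b, C b ν p * C i' b q) • B i' := by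
    calc ⁅⁅B ν, B p⁆, B q⁆ = ∑ b, C b ν p • ⁅B b, B q⁆ := by
          rw [hC ν p, sum_lie']
          exact Finset.sum_congr rfl fun b _ => smul_lie _ _ _
      _ = ∑ b, ∑ i', (C b ν p * C i' b q) • B i' := by
          refine Finset.sum_congr rfl fun b _ => ?_
          rw [hC b q, Finset.smul_sum]
          exact Finset.sum_congr rfl fun i' _ => (smul_smul _ _ _)
      _ = ∑ i', (∑ b, C b ν p * C i' b q) • B i' := by
          rw [Finset.sum_comm]
          exact Finset.sum_congr rfl fun i' _ => (Finset.sum_smul).symm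
  have h3 : ⁅B p, ⁅B ν, B q⁆⁆ = ∑ i', (∑ c, C c ν q * C i' p c) • B i' := by
    calc ⁅B p, ⁅B ν, B q⁆⁆ = ∑ c, C c ν q • ⁅B p, B c⁆ := by
          rw [hC ν q, lie_sum']
          exact Finset.sum_congr rfl fun c _ => lie_smul _ _ _
      _ = ∑ c, ∑ i', (C c ν q * C i' p c) • B i' := by
          refine Finset.sum_congr rfl fun c _ => ?_
          rw [hC p c, Finset.smul_sum]
          exact Finset.sum_congr rfl fun i' _ => (smul_smul _ _ _)
      _ = ∑ i', (∑ c, C c ν q * C i' p c) • B i' := by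
          rw [Finset.sum_comm]
          exact Finset.sum_congr rfl fun i' _ => (Finset.sum_smul).symm
  have hle : ⁅B ν, ⁅B p, B q⁆⁆ = ⁅⁅B ν, B p⁆, B q⁆ + ⁅B p, ⁅B ν, B q⁆⁆ :=
    leibniz_lie _ _ _
  rw [h1, h2, h3, ← Finset.sum_add_distrib] at hle
  have := coeff_eq B _ _ (by
    refine hle.trans (Finset.sum_congr rfl fun i' _ => ?_)
    rw [add_smul])
  exact congrFun this i

end LieCoord

section Cnu

variable {n : ℕ} {L : Type} [LieRing L] [LieAlgebra ℝ L] (B : Module.Basis (Fin n) ℝ L)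
  (C : Fin n → Fin n → Fin n → ℝ)

lemma C_nu (hn : 2 ≤ n)
    (hC : ∀ j k, ⁅B j, B k⁆ = ∑ i, C i j k • B i)
    (hideal : ∀ x y : L, y ∈ Submodule.span ℝ (⇑B '' {i : Fin n | (i : ℕ) < n - 1}) →
      ⁅x, y⁆ ∈ Submodule.span ℝ (⇑B '' {i : Fin n | (i : ℕ) < n - 1}))
    (j k : Fin n) : C (⟨n - 1, Nat.sub_lt (by omega) Nat.one_pos⟩ : Fin n) j k = 0 := by
  set ν : Fin n := ⟨n - 1, Nat.sub_lt (by omega) Nat.one_pos⟩ with hν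
  set K := Submodule.span ℝ (⇑B '' {i : Fin n | (i : ℕ) < n - 1}) with hK
  have hrepr : ∀ y ∈ K, B.repr y ν = 0 := by
    intro y hy
    have hle : K ≤ LinearMap.ker (B.coord ν) := by
      rw [hK, Submodule.span_le]
      rintro z ⟨i, hi, rfl⟩
      simp only [SetLike.mem_coe, LinearMap.mem_ker, Module.Basis.coord_apply, Module.Basis.repr_self_apply]
      have : i ≠ ν := by
        intro h
        rw [h] at hi
        exact absurd hi (by simp [hν])
      simp [this]
    simpa using hle hy
  have hmem : ⁅B j, B k⁆ ∈ K := by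
    by_cases hk : (k : ℕ) < n - 1
    · exact hideal _ _ (Submodule.subset_span ⟨k, hk, rfl⟩)
    · have hkν : k = ν := by
        apply Fin.ext
        have := k.isLt
        simp only [hν]
        omega
      subst hkν
      by_cases hj : (j : ℕ) < n - 1
      · rw [← lie_skew]
        exact Submodule.neg_mem _ (hideal _ _ (Submodule.subset_span ⟨j, hj, rfl⟩))
      · have hjν : j = ν := by
          apply Fin.ext
          have := j.isLt
          simp only [hν]
          omega
        subst hjν
        simp only [lie_self]
        exact Submodule.zero_mem _
  have := hrepr _ hmem
  rwa [lie_coeff B C hC] at this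

end Cnu

section KeyAlg

variable {k : ℕ}

lemma sum3_swap (F : Fin k → Fin k → Fin k → ℝ) :
    ∑ j, ∑ p, ∑ q, F j p q = ∑ p, ∑ q, ∑ j, F j p q :=
  calc ∑ j, ∑ p, ∑ q, F j p q
      = ∑ p, ∑ j, ∑ q, F j p q := Finset.sum_comm
    _ = ∑ p, ∑ q, ∑ j, F j p q := Finset.sum_congr rfl fun p _ => Finset.sum_comm

lemma sum4_swap (F : Fin k → Fin k → Fin k → Fin k → ℝ) :
    ∑ b, ∑ c, ∑ p, ∑ q, F b c p q = ∑ p, ∑ q, ∑ b, ∑ c, F b c p q :=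
  calc ∑ b, ∑ c, ∑ p, ∑ q, F b c p q
      = ∑ b, ∑ p, ∑ c, ∑ q, F b c p q :=
        Finset.sum_congr rfl fun b _ => Finset.sum_comm
    _ = ∑ p, ∑ b, ∑ c, ∑ q, F b c p q := Finset.sum_comm
    _ = ∑ p, ∑ b, ∑ q, ∑ c, F b c p q :=
        Finset.sum_congr rfl fun p _ => Finset.sum_congr rfl fun b _ => Finset.sum_comm
    _ = ∑ p, ∑ q, ∑ b, ∑ c, F b c p q :=
        Finset.sum_congr rfl fun p _ => Finset.sum_comm

lemma keyAlg (ν a : Fin k) (C : Fin k → Fin k → Fin k → ℝ)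
    (E NE : Matrix (Fin k) (Fin k) ℝ) (W : Fin k → Fin k → ℝ) (D : Fin k → ℝ)
    (hNE : ∀ x y, NE x y = ∑ z, C x ν z * E z y)
    (hW : ∀ p q, W q p = -W p q)
    (hCsk : ∀ i p q, C i q p = -C i p q)
    (hrow : ∀ b, E ν b = if ν = b then 1 else 0)
    (haut : ∀ p q, ∑ b, ∑ c, C a b c * (E b p * E c q) = ∑ j, E a j * C j p q)
    (hD : ∀ j, D j = -((1/2) * ∑ p, ∑ q, C j p q * W p q)) :
    (∑ j, (E a j * D j + NE a j * W ν j))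
      + (1/2) * ∑ b, ∑ c, (if b ≠ ν ∧ c ≠ ν then C a b c else 0)
          * (∑ p, ∑ q, E b p * E c q * W p q) = 0 := by
  set Wh : Fin k → Fin k → ℝ := fun b c => ∑ p, ∑ q, E b p * E c q * W p q with hWh
  -- full sum identity
  have hfull : ∑ b, ∑ c, C a b c * Wh b c = ∑ j, E a j * (∑ p, ∑ q, C j p q * W p q) := by
    calc ∑ b, ∑ c, C a b c * Wh b c
        = ∑ b, ∑ c, ∑ p, ∑ q, C a b c * (E b p * E c q) * W p q := by
          refine Finset.sum_congr rfl fun b _ => Finset.sum_congr rfl fun c _ => ?_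
          rw [hWh]
          simp only [Finset.mul_sum]
          exact Finset.sum_congr rfl fun p _ => Finset.sum_congr rfl fun q _ => by ring
      _ = ∑ p, ∑ q, ∑ b, ∑ c, C a b c * (E b p * E c q) * W p q := sum4_swap _
      _ = ∑ p, ∑ q, (∑ j, E a j * C j p q) * W p q := by
          refine Finset.sum_congr rfl fun p _ => Finset.sum_congr rfl fun q _ => ?_
          rw [← haut p q]
          simp only [Finset.sum_mul]
      _ = ∑ j, ∑ p, ∑ q, E a j * C j p q * W p q := by
          rw [sum3_swap fun j p q => E a j * C j p q * W p q]
          exact Finset.sum_congr rfl fun p _ => Finset.sum_congr rfl fun q _ =>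
            Finset.sum_mul _ _ _
      _ = ∑ j, E a j * (∑ p, ∑ q, C j p q * W p q) := by
          refine Finset.sum_congr rfl fun j _ => ?_
          simp only [Finset.mul_sum]
          exact Finset.sum_congr rfl fun p _ => Finset.sum_congr rfl fun q _ => by ring
  -- collapsed hatted wedges against ν
  have hWhν : ∀ c, Wh ν c = ∑ q, E c q * W ν q := by
    intro c
    simp only [hWh, hrow, ite_mul, one_mul, zero_mul]
    rw [Finset.sum_comm]
    simp
  have hWhν' : ∀ b, Wh b ν = -∑ p, E b p * W ν p := by
    intro b
    have hterm : ∀ p q, E b p * E ν q * W p q = if ν = q then E b p * W p q else 0 := by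
      intro p q
      rw [hrow]
      by_cases h : ν = q <;> simp [h]
    simp only [hWh, hterm, Finset.sum_ite_eq, Finset.mem_univ, if_true]
    simp only [hW ν, mul_neg]
    rw [← Finset.sum_neg_distrib]
  -- split the restricted sum
  have hterm : ∀ b c, (if b ≠ ν ∧ c ≠ ν then C a b c else 0) * Wh b c
      = C a b c * Wh b c - (if b = ν then C a b c * Wh b c else 0)
        - (if c = ν then C a b c * Wh b c else 0)
        + (if b = ν ∧ c = ν then C a b c * Wh b c else 0) := by
    intro b c
    by_cases hb : b = ν <;> by_cases hc : c = ν <;> simp [hb, hc]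
  have h2 : ∑ b, ∑ c, (if b = ν then C a b c * Wh b c else 0)
      = ∑ c, C a ν c * Wh ν c := by
    rw [Finset.sum_comm]
    refine Finset.sum_congr rfl fun c _ => ?_
    rw [Finset.sum_ite_eq' Finset.univ ν (fun b => C a b c * Wh b c)]
    simp
  have h3 : ∑ b, ∑ c, (if c = ν then C a b c * Wh b c else 0)
      = ∑ b, C a b ν * Wh b ν := by
    refine Finset.sum_congr rfl fun b _ => ?_
    rw [Finset.sum_ite_eq' Finset.univ ν (fun c => C a b c * Wh b c)]
    simp
  have h4 : ∑ b, ∑ c, (if b = ν ∧ c = ν then C a b c * Wh b c else 0)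
      = C a ν ν * Wh ν ν := by
    have hb4 : ∀ b, ∑ c, (if b = ν ∧ c = ν then C a b c * Wh b c else 0)
        = if b = ν then C a b ν * Wh b ν else 0 := by
      intro b
      by_cases hb : b = ν <;> simp [hb]
    simp only [hb4]
    rw [Finset.sum_ite_eq' Finset.univ ν (fun b => C a b ν * Wh b ν)]
    simp
  have hsplit : ∑ b, ∑ c, (if b ≠ ν ∧ c ≠ ν then C a b c else 0) * Wh b c
      = (∑ b, ∑ c, C a b c * Wh b c)
        - (∑ c, C a ν c * Wh ν c) - (∑ b, C a b ν * Wh b ν)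
        + C a ν ν * Wh ν ν := by
    simp only [hterm, Finset.sum_add_distrib, Finset.sum_sub_distrib]
    rw [h2, h3, h4]
  have hCnn : C a ν ν = 0 := by
    have := hCsk a ν ν
    linarith
  have hT2 : ∑ c, C a ν c * Wh ν c = ∑ q, NE a q * W ν q := by
    simp only [hWhν]
    rw [sumswap (fun c => C a ν c) (fun c q => E c q) (fun q => W ν q)]
    exact Finset.sum_congr rfl fun q _ => by rw [hNE]
  have hT3 : ∑ b, C a b ν * Wh b ν = ∑ q, NE a q * W ν q := by
    simp only [hWhν']
    have hbb : ∀ b, C a b ν * -∑ p, E b p * W ν p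
        = C a ν b * ∑ p, E b p * W ν p := by
      intro b
      rw [hCsk a ν b]
      ring
    simp only [hbb]
    rw [sumswap (fun b => C a ν b) (fun b p => E b p) (fun p => W ν p)]
    exact Finset.sum_congr rfl fun q _ => by rw [hNE]
  have hgoal : ∑ b, ∑ c, (if b ≠ ν ∧ c ≠ ν then C a b c else 0) * Wh b c
      = (-2) * (∑ j, E a j * D j) - 2 * ∑ q, NE a q * W ν q := by
    rw [hsplit, hfull, hT2, hT3, hCnn]
    have hsum2 : ∑ j, E a j * (∑ p, ∑ q, C j p q * W p q)
        = (-2) * ∑ j, E a j * D j := by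
      rw [Finset.mul_sum]
      exact Finset.sum_congr rfl fun j _ => by rw [hD j]; ring
    rw [hsum2]
    ring
  rw [hgoal, Finset.sum_add_distrib]
  ring

end KeyAlg


end AuxLemmas


/-- Reduction via a codimension-one ideal.
If the 1-forms `ω` satisfy the structure equations of `𝔤` in a basis adapted to the
codimension-one ideal `𝔨 = span{e_1, …, e_{n-1}}`, `df = ωⁿ`, and
`ω̂ⁱ = Σ_j exp(f·[ad(eₙ)])ⁱ_j ωʲ`, then `ω̂ⁿ = ωⁿ`, `dω̂ⁿ = 0`, and `ω̂¹, …, ω̂ⁿ⁻¹`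
satisfy the structure equations of `𝔨` in the basis `(e_1, …, e_{n-1})`. -/
theorem statement0
    (n m : ℕ) (hn : 2 ≤ n)
    (L : Type) [LieRing L] [LieAlgebra ℝ L] (B : Module.Basis (Fin n) ℝ L)
    (C : Fin n → Fin n → Fin n → ℝ)
    (hC : ∀ j k, ⁅B j, B k⁆ = ∑ i, C i j k • B i)
    (hideal : ∀ x y : L, y ∈ Submodule.span ℝ (⇑B '' {i : Fin n | (i : ℕ) < n - 1}) →
      ⁅x, y⁆ ∈ Submodule.span ℝ (⇑B '' {i : Fin n | (i : ℕ) < n - 1}))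
    (ω : Fin n → (Fin m → ℝ) → (Fin m → ℝ) →L[ℝ] ℝ)
    (hω : ∀ i, ContDiff ℝ (⊤ : ℕ∞) (ω i))
    (hSE : StructEq C ω)
    (f : (Fin m → ℝ) → ℝ) (hf : ContDiff ℝ (⊤ : ℕ∞) f)
    (hdf : ∀ x, fderiv ℝ f x = ω ⟨n - 1, by omega⟩ x)
    (ωhat : Fin n → (Fin m → ℝ) → (Fin m → ℝ) →L[ℝ] ℝ)
    (hhat : ∀ i x, ωhat i x =
      ∑ j, matExp (f x • adMat C ⟨n - 1, by omega⟩) i j • ω j x) :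
    (∀ x, ωhat ⟨n - 1, by omega⟩ x = ω ⟨n - 1, by omega⟩ x) ∧
    (∀ x u v, extDerivOneForm (ωhat ⟨n - 1, by omega⟩) x u v = 0) ∧
    (∀ a : Fin n, (a : ℕ) < n - 1 → ∀ x u v,
      extDerivOneForm (ωhat a) x u v
        + (1 / 2) * ∑ b : Fin n, ∑ c : Fin n,
            (if (b : ℕ) < n - 1 ∧ (c : ℕ) < n - 1 then C a b c else 0)
              * wedge (ωhat b) (ωhat c) x u v = 0) := by
  have hn1 : n - 1 < n := by omega
  set ν : Fin n := ⟨n - 1, hn1⟩ with hνdef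
  set N : Matrix (Fin n) (Fin n) ℝ := adMat C ν with hNdef
  have hCν : ∀ j k, C ν j k = 0 := C_nu B C hn hC hideal
  have hrowN : ∀ b, N ν b = 0 := fun b => hCν ν b
  have hrowE : ∀ (t : ℝ) (b : Fin n), matExp (t • N) ν b = if ν = b then 1 else 0 := by
    intro t b
    rw [matExp_row_one N ν hrowN t b, Matrix.one_apply]
  -- part 1
  have h1 : ∀ x, ωhat ν x = ω ν x := by
    intro x
    rw [hhat ν x]
    have : ∀ j : Fin n, matExp (f x • N) ν j • ω j x
        = (if ν = j then (1:ℝ) else 0) • ω j x := fun j => by rw [hrowE (f x) j]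
    rw [Finset.sum_congr rfl fun j _ => this j]
    simp
  refine ⟨h1, ?_, ?_⟩
  -- part 2
  · intro x u v
    have hfun : ωhat ν = ω ν := funext h1
    rw [hfun]
    have := hSE ν x u v
    simp only [hCν, zero_mul, Finset.sum_const_zero, mul_zero, add_zero] at this
    exact this
  -- part 3
  · intro a ha x u v
    set t : ℝ := f x with htdef
    set E : Matrix (Fin n) (Fin n) ℝ := matExp (t • N) with hEdef
    set NE : Matrix (Fin n) (Fin n) ℝ := N * E with hNEdef
    set W : Fin n → Fin n → ℝ := fun p q => wedge (ω p) (ω q) x u v with hWdef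
    set D : Fin n → ℝ := fun j => extDerivOneForm (ω j) x u v with hDdef
    -- derivatives
    have hfderiv_f : HasFDerivAt f (ω ν x) x := by
      have hd := ((hf.differentiable (by simp)) x).hasFDerivAt
      rwa [hdf x] at hd
    have hωd : ∀ j, HasFDerivAt (ω j) (fderiv ℝ (ω j) x) x :=
      fun j => (((hω j).differentiable (by simp)) x).hasFDerivAt
    have hcj : ∀ j, HasFDerivAt (fun y => matExp (f y • N) a j) (NE a j • ω ν x) x := by
      intro j
      have h1' : HasDerivAt (fun s : ℝ => matExp (s • N) a j) (NE a j) t :=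
        matExp_entry_hasDerivAt N t a j
      exact h1'.comp_hasFDerivAt x hfderiv_f
    have hterm : ∀ j, HasFDerivAt (fun y => matExp (f y • N) a j • ω j y)
        (E a j • fderiv ℝ (ω j) x + (NE a j • ω ν x).smulRight (ω j x)) x :=
      fun j => (hcj j).smul (hωd j)
    have hfun : ωhat a = fun y => ∑ j, matExp (f y • N) a j • ω j y :=
      funext fun y => hhat a y
    have hsum : HasFDerivAt (ωhat a)
        (∑ j, (E a j • fderiv ℝ (ω j) x + (NE a j • ω ν x).smulRight (ω j x))) x := by
      rw [hfun]
      exact HasFDerivAt.fun_sum (fun j _ => hterm j)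
    have hfd : fderiv ℝ (ωhat a) x
        = ∑ j, (E a j • fderiv ℝ (ω j) x + (NE a j • ω ν x).smulRight (ω j x)) :=
      hsum.fderiv
    have hEd : extDerivOneForm (ωhat a) x u v = ∑ j, (E a j * D j + NE a j * W ν j) := by
      rw [extDerivOneForm, hfd]
      simp only [ContinuousLinearMap.sum_apply, ContinuousLinearMap.add_apply,
        ContinuousLinearMap.coe_smul', Pi.smul_apply, ContinuousLinearMap.smulRight_apply,
        ContinuousLinearMap.coe_sum', Finset.sum_apply, smul_eq_mul]
      rw [← Finset.sum_sub_distrib]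
      refine Finset.sum_congr rfl fun j _ => ?_
      simp only [hDdef, hWdef, extDerivOneForm, wedge]
      ring
    have hwh : ∀ b c, wedge (ωhat b) (ωhat c) x u v
        = ∑ p, ∑ q, E b p * E c q * W p q := by
      intro b c
      rw [wedge, hhat b x, hhat c x]
      simp only [ContinuousLinearMap.coe_sum', Finset.sum_apply,
        ContinuousLinearMap.coe_smul', Pi.smul_apply, smul_eq_mul]
      rw [Finset.sum_mul_sum, Finset.sum_mul_sum, ← Finset.sum_sub_distrib]
      refine Finset.sum_congr rfl fun p _ => ?_
      rw [← Finset.sum_sub_distrib]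
      refine Finset.sum_congr rfl fun q _ => ?_
      simp only [hWdef, wedge]
      ring
    -- matrix-level derivation identity
    have hder : ∀ i, Matrix.transpose N * (Matrix.of fun b c => C i b c)
        + (Matrix.of fun b c => C i b c) * N
        = ∑ j, N i j • (Matrix.of fun b c => C j b c) := by
      intro i
      ext p q
      simp only [Matrix.add_apply, Matrix.mul_apply, Matrix.sum_apply, Matrix.smul_apply,
        Matrix.transpose_apply, Matrix.of_apply, smul_eq_mul]
      show ∑ b, C b ν p * C i b q + ∑ c, C i p c * C c ν q = ∑ j, C i ν j * C j p q
      rw [C_jacobi B C hC ν i p q]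
      congr 1
      exact Finset.sum_congr rfl fun c _ => mul_comm _ _
    have haut : ∀ p q, ∑ b, ∑ c, C a b c * (E b p * E c q) = ∑ j, E a j * C j p q := by
      intro p q
      have hA := matExp_aut N (fun i => (Matrix.of fun b c => C i b c))
        hder t p q a
      have h1 : ∀ j, (Matrix.transpose (matExp (t • N)) * (Matrix.of fun b c => C a b c)) p j
          = ∑ b, E b p * C a b j := by
        intro j
        rw [Matrix.mul_apply]
        exact Finset.sum_congr rfl fun b _ => by
          rw [Matrix.transpose_apply, Matrix.of_apply]
      have hL : (Matrix.transpose (matExp (t • N)) * (Matrix.of fun b c => C a b c)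
          * matExp (t • N)) p q = ∑ b, ∑ c, C a b c * (E b p * E c q) := by
        rw [Matrix.mul_apply]
        calc ∑ j, (Matrix.transpose (matExp (t • N)) * (Matrix.of fun b c => C a b c)) p j
              * matExp (t • N) j q
            = ∑ j, ∑ b, (E b p * C a b j) * E j q := by
              refine Finset.sum_congr rfl fun j _ => ?_
              rw [h1 j, Finset.sum_mul]
          _ = ∑ b, ∑ j, (E b p * C a b j) * E j q := Finset.sum_comm
          _ = ∑ b, ∑ c, C a b c * (E b p * E c q) := by
              refine Finset.sum_congr rfl fun b _ => Finset.sum_congr rfl fun c _ => by ring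
      rw [← hL, hA]
      rfl
    have hNE' : ∀ x' y, NE x' y = ∑ z, C x' ν z * E z y := fun x' y => Matrix.mul_apply
    have hW' : ∀ p q, W q p = -W p q := by
      intro p q
      simp only [hWdef, wedge]
      ring
    have hCsk' : ∀ i p q, C i q p = -C i p q := C_skew B C hC
    have hD' : ∀ j, D j = -((1/2) * ∑ p, ∑ q, C j p q * W p q) := by
      intro j
      have := hSE j x u v
      simp only [hDdef, hWdef]
      linarith
    have hkey := keyAlg ν a C E NE W D hNE' hW' hCsk' (hrowE t) haut hD'
    have htrans : ∑ b : Fin n, ∑ c : Fin n,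
        (if (b : ℕ) < n - 1 ∧ (c : ℕ) < n - 1 then C a b c else 0)
          * wedge (ωhat b) (ωhat c) x u v
        = ∑ b, ∑ c, (if b ≠ ν ∧ c ≠ ν then C a b c else 0)
            * (∑ p, ∑ q, E b p * E c q * W p q) := by
      refine Finset.sum_congr rfl fun b _ => Finset.sum_congr rfl fun c _ => ?_
      rw [hwh b c]
      congr 1
      refine if_congr (and_congr ?_ ?_) rfl rfl <;>
      · rw [Fin.ne_iff_vne]
        simp only [hνdef]
        omega
    rw [hEd, htrans]
    exact hkey
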